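/- The sum of the squared vertex weights satisfies ∑_{v∈V} wt(v)^2 ≤ 4·μ^{2 − 1/(s+1)}. -/

import Mathlib

open Finset

lemma holder_aux {ι : Type*} (A : Finset ι) (x : ι → ℝ) (hx : ∀ i ∈ A, 0 ≤ x i)
    (s : ℕ) (hs : 1 ≤ s) :
    ∑ i ∈ A, x i ^ (s - 1) ≤
      (A.card : ℝ) ^ ((1 : ℝ) / s) * (∑ i ∈ A, x i ^ s) ^ (((s : ℝ) - 1) / s) := by
  have hsum0 : 0 ≤ ∑ i ∈ A, x i ^ s := Finset.sum_nonneg fun i hi => pow_nonneg (hx i hi) s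
  rcases eq_or_lt_of_le hs with h1 | h2
  · -- s = 1
    subst h1
    simp [Real.rpow_zero, Real.rpow_one]
  · -- 2 ≤ s
    have hs1 : (1 : ℝ) < (s : ℝ) := by exact_mod_cast h2
    have hs0 : (s : ℝ) ≠ 0 := by positivity
    have hsm1 : (0 : ℝ) < (s : ℝ) - 1 := by linarith
    have hpq : Real.HolderConjugate ((s : ℝ) / ((s : ℝ) - 1)) (s : ℝ) := by
      exact ((Real.holderConjugate_iff_eq_conjExponent hs1).mpr rfl).symm
    have := Real.inner_le_Lp_mul_Lq A (fun i => x i ^ (s - 1)) (fun _ => (1 : ℝ)) hpq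
    simp only [mul_one, abs_one, Real.one_rpow, Finset.sum_const, nsmul_eq_mul] at this
    have hrw : ∀ i ∈ A, |x i ^ (s - 1)| ^ ((s : ℝ) / ((s : ℝ) - 1)) = x i ^ s := by
      intro i hi
      rw [abs_of_nonneg (pow_nonneg (hx i hi) _), ← Real.rpow_natCast (x i) (s - 1),
        ← Real.rpow_mul (hx i hi)]
      have : ((s - 1 : ℕ) : ℝ) = (s : ℝ) - 1 := by
        have : (1 : ℕ) ≤ s := hs
        push_cast [this]; ring
      rw [this]
      rw [mul_div_cancel₀ _ (ne_of_gt hsm1)]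
      exact Real.rpow_natCast (x i) s
    rw [Finset.sum_congr rfl hrw] at this
    calc ∑ i ∈ A, x i ^ (s - 1)
        ≤ (∑ i ∈ A, x i ^ s) ^ (1 / ((s : ℝ) / ((s : ℝ) - 1))) * (A.card : ℝ) ^ (1 / (s : ℝ)) := this
      _ = (A.card : ℝ) ^ ((1 : ℝ) / s) * (∑ i ∈ A, x i ^ s) ^ (((s : ℝ) - 1) / s) := by
          rw [one_div_div, mul_comm]

/-- The sum of the squared vertex weights satisfies
`∑_{v ∈ V} wt(v)^2 ≤ 4·μ^{2 − 1/(s+1)}`, where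
`wt(v) = ∑_{u ∈ Γ⁺(v)} (d_v^{s-1} + d_u^{s-1})` and `μ = ∑_{v ∈ V} d_v^s`. -/
theorem sum_wt_sq_le {V : Type*} [Fintype V] [DecidableEq V]
    (G : SimpleGraph V) [DecidableRel G.Adj]
    (s : ℕ) (hs : 1 ≤ s)
    (prec : V → V → Prop) [DecidableRel prec] [IsStrictTotalOrder V prec]
    (hmono : ∀ u v : V, G.degree u < G.degree v → prec u v)
    (μ : ℝ) (hμ : μ = ∑ v : V, (G.degree v : ℝ) ^ s) :
    ∑ v : V, (∑ u ∈ (G.neighborFinset v).filter (fun u => prec v u),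
        ((G.degree v : ℝ) ^ (s - 1) + (G.degree u : ℝ) ^ (s - 1))) ^ 2 ≤
      4 * μ ^ ((2 : ℝ) - 1 / ((s : ℝ) + 1)) := by
  set d : V → ℝ := fun v => (G.degree v : ℝ) with hd
  set A : V → Finset V := fun v => (G.neighborFinset v).filter (fun u => prec v u) with hA
  set S : V → ℝ := fun v => ∑ u ∈ A v, d u ^ (s - 1) with hS
  have hd0 : ∀ v, 0 ≤ d v := fun v => Nat.cast_nonneg _
  have hS0 : ∀ v, 0 ≤ S v := fun v =>
    Finset.sum_nonneg fun u _ => pow_nonneg (hd0 u) _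
  have hμ0 : 0 ≤ μ := hμ ▸ Finset.sum_nonneg fun v _ => pow_nonneg (hd0 v) _
  have hle : ∀ v u, u ∈ A v → d v ≤ d u := by
    intro v u hu
    rw [hA] at hu
    simp only [Finset.mem_filter] at hu
    by_contra h
    push_neg at h
    simp only [hd] at h
    have hdeg : G.degree u < G.degree v := by exact_mod_cast h
    have h1 : prec u v := hmono u v hdeg
    exact absurd (Trans.trans hu.2 h1) (irrefl v)
  have hupper : ∀ v, ∑ u ∈ A v, d u ^ s ≤ μ := by
    intro v
    rw [hμ]
    exact Finset.sum_le_sum_of_subset_of_nonneg (Finset.subset_univ _)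
      (fun u _ _ => pow_nonneg (hd0 u) _)
  have hSd : ∀ v, S v * d v ≤ μ := by
    intro v
    calc S v * d v = ∑ u ∈ A v, d u ^ (s - 1) * d v := by
          simp only [hS]; rw [Finset.sum_mul]
      _ ≤ ∑ u ∈ A v, d u ^ s := by
          apply Finset.sum_le_sum
          intro u hu
          calc d u ^ (s - 1) * d v ≤ d u ^ (s - 1) * d u :=
                mul_le_mul_of_nonneg_left (hle v u hu) (pow_nonneg (hd0 u) _)
            _ = d u ^ s := by
                rw [← pow_succ]
                congr 1
                omega
      _ ≤ μ := hupper v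
  have hcard : ∀ v, ((A v).card : ℝ) ≤ d v := by
    intro v
    have h1 : (A v).card ≤ G.degree v := by
      simp only [hA, ← G.card_neighborFinset_eq_degree]
      exact Finset.card_filter_le _ _
    simp only [hd]
    exact_mod_cast h1
  have hsum : ∑ v, S v ≤ μ := by
    have h1 : ∑ v, S v = ∑ v : V, ∑ u : V, if u ∈ A v then d u ^ (s - 1) else 0 := by
      refine Finset.sum_congr rfl fun v _ => ?_
      simp only [hS]
      rw [Finset.sum_ite_mem, Finset.univ_inter]
    rw [h1, Finset.sum_comm, hμ]
    apply Finset.sum_le_sum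
    intro u _
    have h2 : ∑ v : V, (if u ∈ A v then d u ^ (s - 1) else 0)
        = ((Finset.univ.filter (fun v => u ∈ A v)).card : ℝ) * d u ^ (s - 1) := by
      rw [← Finset.sum_filter, Finset.sum_const, nsmul_eq_mul]
    rw [h2]
    have h3 : (Finset.univ.filter (fun v => u ∈ A v)) ⊆ G.neighborFinset u := by
      intro v hv
      rw [Finset.mem_filter] at hv
      have h5 := hv.2
      simp only [hA, Finset.mem_filter, SimpleGraph.mem_neighborFinset] at h5
      rw [SimpleGraph.mem_neighborFinset]
      exact h5.1.symm
    have h4 : ((Finset.univ.filter (fun v => u ∈ A v)).card : ℝ) ≤ d u := by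
      have := (Finset.card_le_card h3).trans_eq (G.card_neighborFinset_eq_degree u)
      simp only [hd]
      exact_mod_cast this
    calc ((Finset.univ.filter (fun v => u ∈ A v)).card : ℝ) * d u ^ (s - 1)
        ≤ d u * d u ^ (s - 1) := mul_le_mul_of_nonneg_right h4 (pow_nonneg (hd0 u) _)
      _ = d u ^ s := by rw [← pow_succ']; congr 1; omega
  have hwt : ∀ v, ∑ u ∈ A v, (d v ^ (s - 1) + d u ^ (s - 1)) ≤ 2 * S v := by
    intro v
    simp only [hS]
    rw [Finset.mul_sum]
    apply Finset.sum_le_sum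
    intro u hu
    have : d v ^ (s - 1) ≤ d u ^ (s - 1) := pow_le_pow_left₀ (hd0 v) (hle v u hu) _
    linarith
  have hwt0 : ∀ v, 0 ≤ ∑ u ∈ A v, (d v ^ (s - 1) + d u ^ (s - 1)) := fun v =>
    Finset.sum_nonneg fun u _ => add_nonneg (pow_nonneg (hd0 v) _) (pow_nonneg (hd0 u) _)
  rcases eq_or_lt_of_le hμ0 with hμz | hμpos
  · -- μ = 0
    have hdeg0 : ∀ v : V, d v = 0 := by
      intro v
      have h0 : ∀ w ∈ (Finset.univ : Finset V), (0:ℝ) ≤ d w ^ s :=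
        fun w _ => pow_nonneg (hd0 w) _
      have h1 := (Finset.sum_eq_zero_iff_of_nonneg h0).mp (hμ ▸ hμz.symm) v (Finset.mem_univ v)
      exact pow_eq_zero_iff (by omega) |>.mp h1
    have hAv : ∀ v, A v = ∅ := by
      intro v
      have h1 : G.neighborFinset v = ∅ := by
        rw [← Finset.card_eq_zero, G.card_neighborFinset_eq_degree]
        have h2 := hdeg0 v
        simp only [hd] at h2
        exact_mod_cast h2
      simp only [hA, h1, Finset.filter_empty]
    have hLHS : ∑ v : V, (∑ u ∈ A v, (d v ^ (s - 1) + d u ^ (s - 1))) ^ 2 = 0 := by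
      apply Finset.sum_eq_zero
      intro v _
      rw [hAv v, Finset.sum_empty]
      ring
    exact le_trans (le_of_eq hLHS) (by positivity)
  -- μ > 0
  have hsR : (1:ℝ) ≤ (s:ℝ) := by exact_mod_cast hs
  have hs1pos : (0:ℝ) < (s:ℝ) + 1 := by linarith
  have hsne : (s:ℝ) ≠ 0 := by positivity
  have hs1ne : (s:ℝ) + 1 ≠ 0 := ne_of_gt hs1pos
  have key : ∀ v, S v ≤ μ ^ ((s:ℝ)/((s:ℝ)+1)) := by
    intro v
    by_cases hAv : A v = ∅
    · have h0 : S v = 0 := by simp [hS, hAv]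
      rw [h0]
      exact Real.rpow_nonneg hμ0 _
    · have hne : (A v).Nonempty := Finset.nonempty_iff_ne_empty.mpr hAv
      obtain ⟨u, hu⟩ := hne
      have hadj : u ∈ G.neighborFinset v := by
        have := hu
        rw [hA] at this
        exact (Finset.mem_filter.mp this).1
      have hdv1 : (1:ℝ) ≤ d v := by
        have h1 : 1 ≤ G.degree v := by
          rw [← G.card_neighborFinset_eq_degree]
          exact Finset.card_pos.mpr ⟨u, hadj⟩
        simp only [hd]
        exact_mod_cast h1
      have hdvpos : (0:ℝ) < d v := lt_of_lt_of_le one_pos hdv1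
      rcases le_or_gt (μ ^ ((1:ℝ)/((s:ℝ)+1))) (d v) with hcase | hcase
      · -- large degree
        have hth : (0:ℝ) < μ ^ ((1:ℝ)/((s:ℝ)+1)) := Real.rpow_pos_of_pos hμpos _
        have h1 : S v ≤ μ / d v := (le_div_iff₀ hdvpos).mpr (hSd v)
        have h2 : μ / d v ≤ μ / μ ^ ((1:ℝ)/((s:ℝ)+1)) := by gcongr
        have h3 : μ / μ ^ ((1:ℝ)/((s:ℝ)+1)) = μ ^ ((s:ℝ)/((s:ℝ)+1)) := by
          nth_rewrite 1 [← Real.rpow_one μ]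
          rw [← Real.rpow_sub hμpos]
          congr 1
          field_simp
          ring
        exact (h1.trans h2).trans_eq h3
      · -- small degree
        have hH := holder_aux (A v) d (fun i _ => hd0 i) s hs
        have hc : ((A v).card : ℝ) ^ ((1:ℝ)/s) ≤ (d v) ^ ((1:ℝ)/s) :=
          Real.rpow_le_rpow (Nat.cast_nonneg _) (hcard v) (by positivity)
      
        have hm : (∑ u ∈ A v, d u ^ s) ^ (((s:ℝ)-1)/s) ≤ μ ^ (((s:ℝ)-1)/s) :=
          Real.rpow_le_rpow (Finset.sum_nonneg fun u _ => pow_nonneg (hd0 u) _)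
            (hupper v) (div_nonneg (by linarith) (by linarith))
        have hdvr : (d v) ^ ((1:ℝ)/s) ≤ (μ ^ ((1:ℝ)/((s:ℝ)+1))) ^ ((1:ℝ)/s) :=
          Real.rpow_le_rpow (le_of_lt hdvpos) (le_of_lt hcase) (by positivity)
        have hfin : (μ ^ ((1:ℝ)/((s:ℝ)+1))) ^ ((1:ℝ)/s) * μ ^ (((s:ℝ)-1)/s)
            = μ ^ ((s:ℝ)/((s:ℝ)+1)) := by
          rw [← Real.rpow_mul hμ0, ← Real.rpow_add hμpos]
          congr 1
          field_simp
          ring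
        calc S v ≤ ((A v).card : ℝ) ^ ((1:ℝ)/s) * (∑ u ∈ A v, d u ^ s) ^ (((s:ℝ)-1)/s) := hH
          _ ≤ (μ ^ ((1:ℝ)/((s:ℝ)+1))) ^ ((1:ℝ)/s) * μ ^ (((s:ℝ)-1)/s) := by
              apply mul_le_mul (hc.trans hdvr) hm
              · exact Real.rpow_nonneg
                  (Finset.sum_nonneg fun u _ => pow_nonneg (hd0 u) _) _
              · positivity
          _ = μ ^ ((s:ℝ)/((s:ℝ)+1)) := hfin
  -- final computation
  have hmain : ∑ v : V, S v ^ 2 ≤ μ ^ ((s:ℝ)/((s:ℝ)+1)) * μ := by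
    calc ∑ v : V, S v ^ 2 ≤ ∑ v : V, μ ^ ((s:ℝ)/((s:ℝ)+1)) * S v := by
          apply Finset.sum_le_sum
          intro v _
          rw [sq]
          exact mul_le_mul_of_nonneg_right (key v) (hS0 v)
      _ = μ ^ ((s:ℝ)/((s:ℝ)+1)) * ∑ v : V, S v := (Finset.mul_sum _ _ _).symm
      _ ≤ μ ^ ((s:ℝ)/((s:ℝ)+1)) * μ :=
          mul_le_mul_of_nonneg_left hsum (Real.rpow_nonneg hμ0 _)
  have hexp : μ ^ ((s:ℝ)/((s:ℝ)+1)) * μ = μ ^ ((2:ℝ) - 1/((s:ℝ)+1)) := by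
    calc μ ^ ((s:ℝ)/((s:ℝ)+1)) * μ = μ ^ ((s:ℝ)/((s:ℝ)+1)) * μ ^ (1:ℝ) := by
          rw [Real.rpow_one]
      _ = μ ^ ((s:ℝ)/((s:ℝ)+1) + 1) := (Real.rpow_add hμpos _ _).symm
      _ = μ ^ ((2:ℝ) - 1/((s:ℝ)+1)) := by
          congr 1
          field_simp
          ring
  calc ∑ v : V, (∑ u ∈ A v, (d v ^ (s - 1) + d u ^ (s - 1))) ^ 2
      ≤ ∑ v : V, (2 * S v) ^ 2 := by
        apply Finset.sum_le_sum
        intro v _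
        exact pow_le_pow_left₀ (hwt0 v) (hwt v) 2
    _ = 4 * ∑ v : V, S v ^ 2 := by
        rw [Finset.mul_sum]
        apply Finset.sum_congr rfl
        intro v _
        ring
    _ ≤ 4 * (μ ^ ((s:ℝ)/((s:ℝ)+1)) * μ) := by linarith
    _ = 4 * μ ^ ((2:ℝ) - 1/((s:ℝ)+1)) := by rw [hexp]
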